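/- Let C, C' ⊆ ℝ be disjoint subsets such that C ⊆ ℝ_{≥0} and C ∪ C' is algebraically independent over ℚ, and let K = ℚ(√C ∪ C') be the subfield of ℝ generated over ℚ by √C ∪ C', where √C = {√c | c ∈ C}. Then no element c' ∈ C' is a square in K, i.e. for every c' ∈ C' and every b ∈ K one has b² ≠ c'. -/

import Mathlib

private theorem im_eq_zero_of_sq_eq_ofReal {z : ℂ} {r : ℝ} (hr : 0 ≤ r)
    (h : z ^ 2 = Complex.ofReal r) : z.im = 0 := by
  rw [sq] at h
  have hre : z.re * z.re - z.im * z.im = r := by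
    have := congrArg Complex.re h; simpa [Complex.mul_re] using this
  have him : z.re * z.im + z.im * z.re = 0 := by
    have := congrArg Complex.im h; simpa [Complex.mul_im] using this
  by_contra h0
  have hz : z.re = 0 := by
    rcases mul_eq_zero.mp (by linarith : z.re * z.im = 0) with h1 | h1
    · exact h1
    · exact absurd h1 h0
  nlinarith [mul_self_pos.mpr h0]

set_option maxHeartbeats 1000000 in
/-- Let `C, C' ⊆ ℝ` be disjoint, with `C ⊆ ℝ≥0` and `C ∪ C'` algebraically independent over `ℚ`,
and let `K = ℚ(√C ∪ C')` be the smallest subfield of `ℝ` containing `ℚ ∪ √C ∪ C'`.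
Then no element of `C'` is a square in `K`. -/
theorem no_element_of_C'_is_square (C C' : Set ℝ) (hdisj : Disjoint C C')
    (hC : C ⊆ {x : ℝ | 0 ≤ x})
    (hind : AlgebraicIndependent ℚ ((↑) : (C ∪ C' : Set ℝ) → ℝ))
    (K : Subfield ℝ)
    (hK : K = Subfield.closure (Set.range ((↑) : ℚ → ℝ) ∪ (Real.sqrt '' C ∪ C'))) :
    ∀ c' ∈ C', ∀ b ∈ K, b ^ 2 ≠ c' := by
  classical
  open MvPolynomial in
  subst hK
  rintro c' hc' b hb hb2
  set ι := ↥(C ∪ C' : Set ℝ)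
  set R := MvPolynomial ι ℚ
  set α : R →ₐ[ℚ] ℝ := aeval ((↑) : ι → ℝ) with hα
  have hαinj : Function.Injective α :=
    algebraicIndependent_iff_injective_aeval.mp hind
  set σ : ι → ℚ := fun i => if (i : ℝ) ∈ C' then -1 else 1 with hσ
  have hσsq : ∀ i, σ i * σ i = 1 := by
    intro i; by_cases h : (i:ℝ) ∈ C' <;> simp [σ, h]
  set u : R →ₐ[ℚ] R := aeval (fun i => σ i • X i) with hu
  have huu : ∀ p, u (u p) = p := by
    have : u.comp u = AlgHom.id ℚ R := by
      apply MvPolynomial.algHom_ext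
      intro i
      rw [AlgHom.comp_apply, hu, aeval_X, map_smul, aeval_X, smul_smul, hσsq, one_smul,
        AlgHom.id_apply]
    intro p
    have h2 := DFunLike.congr_fun this p
    simpa using h2
  set β : R →ₐ[ℚ] ℝ := aeval (fun i => (σ i : ℝ) * i) with hβ
  have hβα : ∀ p, β p = α (u p) := by
    have : β = α.comp u := by
      apply MvPolynomial.algHom_ext
      intro i
      rw [hβ, aeval_X, AlgHom.comp_apply, hu, aeval_X, map_smul, hα, aeval_X, Rat.smul_def]
    intro p; rw [this]; rfl
  have hβinj : Function.Injective β := by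
    intro p q h
    rw [hβα, hβα] at h
    have := hαinj h
    calc p = u (u p) := (huu p).symm
    _ = u (u q) := by rw [this]
    _ = q := huu q
  have hαX : ∀ i : ι, α (X i) = (i : ℝ) := by
    intro i; rw [hα, aeval_X]
  have hβX : ∀ i : ι, β (X i) = (σ i : ℝ) * i := by
    intro i; rw [hβ, aeval_X]
  -- c' is nonzero
  have hc'0 : c' ≠ 0 := by
    intro h0
    have h1 : α (X ⟨c', Or.inr hc'⟩) = α 0 := by
      rw [hαX, map_zero]; exact h0
    exact MvPolynomial.X_ne_zero _ (hαinj h1)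
  have hc'pos : 0 < c' := lt_of_le_of_ne (hb2 ▸ sq_nonneg b) (Ne.symm hc'0)
  -- the fraction field and the twisted embedding
  set F := FractionRing R
  set αh : F →+* ℝ := IsFractionRing.lift (g := α.toRingHom) hαinj with hαh
  set βh : F →+* ℝ := IsFractionRing.lift (g := β.toRingHom) hβinj with hβh
  letI : Algebra F ℝ := αh.toAlgebra
  letI : Algebra F ℂ := (Complex.ofRealHom.comp βh).toAlgebra
  haveI : Module.IsTorsionFree F ℝ :=
    Module.isTorsionFree_iff_algebraMap_injective.mpr αh.injective
  haveI : Module.IsTorsionFree F ℂ :=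
    Module.isTorsionFree_iff_algebraMap_injective.mpr (Complex.ofRealHom.comp βh).injective
  set S := algebraicClosure F ℝ with hS
  haveI : Module.IsTorsionFree F S :=
    Module.isTorsionFree_iff_algebraMap_injective.mpr (algebraMap F S).injective
  set ψ : S →ₐ[F] ℂ := IsAlgClosed.lift with hψ
  set t : ι → F := fun i => algebraMap R F (X i) with ht
  have hαt : ∀ i, algebraMap F ℝ (t i) = α (X i) := by
    intro i
    show αh (algebraMap R F (X i)) = _
    rw [hαh, IsFractionRing.lift_algebraMap]
    rfl
  have hSmem : ∀ i : ι, (i : ℝ) ∈ S := by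
    intro i
    rw [← hαX i, ← hαt]
    exact S.algebraMap_mem _
  have hψt : ∀ (i : ι) (h : (i : ℝ) ∈ S),
      ψ (⟨(i : ℝ), h⟩ : S) = Complex.ofReal ((σ i : ℝ) * i) := by
    intro i h
    have h1 : (⟨(i : ℝ), h⟩ : S) = algebraMap F S (t i) := by
      apply Subtype.ext
      show _ = algebraMap F ℝ (t i)
      rw [hαt, hαX]
    rw [h1, ψ.commutes]
    show Complex.ofRealHom (βh (t i)) = _
    rw [ht, hβh, IsFractionRing.lift_algebraMap]
    show Complex.ofRealHom (β (X i)) = _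
    rw [hβX]
    rfl
  have hrat : ∀ q : ℚ, (q : ℝ) = algebraMap F ℝ (q : F) := by
    intro q
    show _ = αh (q : F)
    rw [map_ratCast]
  -- sqrt elements are integral
  have hsqrt : ∀ c ∈ C, Real.sqrt c ∈ S := by
    intro c hc
    rw [hS, mem_algebraicClosure_iff']
    refine ⟨Polynomial.X ^ 2 - Polynomial.C (t ⟨c, Or.inl hc⟩),
      Polynomial.monic_X_pow_sub_C _ two_ne_zero, ?_⟩
    have hev : Polynomial.eval₂ (algebraMap F ℝ) (Real.sqrt c)
        (Polynomial.X ^ 2 - Polynomial.C (t ⟨c, Or.inl hc⟩))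
        = Real.sqrt c ^ 2 - algebraMap F ℝ (t ⟨c, Or.inl hc⟩) := by
      simp
    rw [hev, hαt, hαX, Real.sq_sqrt (hC hc), sub_self]
  -- K is contained in S
  have hgens : (Set.range ((↑) : ℚ → ℝ) ∪ (Real.sqrt '' C ∪ C')) ⊆ S.toSubfield := by
    rintro x (⟨q, rfl⟩ | (⟨c, hc, rfl⟩ | hx))
    · show (q : ℝ) ∈ S
      rw [hrat q]
      exact S.algebraMap_mem _
    · show Real.sqrt c ∈ S
      exact hsqrt c hc
    · show x ∈ S
      exact hSmem ⟨x, Or.inr hx⟩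
  have hKS : Subfield.closure (Set.range ((↑) : ℚ → ℝ) ∪ (Real.sqrt '' C ∪ C'))
      ≤ S.toSubfield := (Subfield.closure_le).mpr hgens
  -- all values of ψ on K are real
  have him : ∀ x ∈ Subfield.closure
      (Set.range ((↑) : ℚ → ℝ) ∪ (Real.sqrt '' C ∪ C')),
      ∀ h : x ∈ S, (ψ (⟨x, h⟩ : S)).im = 0 := by
    intro x hx
    induction hx using Subfield.closure_induction with
    | mem y hy =>
      rcases hy with ⟨q, rfl⟩ | (⟨c, hc, rfl⟩ | hy)
      · intro h
        have h1 : (⟨(q : ℝ), h⟩ : S) = algebraMap F S (q : F) := by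
          apply Subtype.ext
          show _ = algebraMap F ℝ (q : F)
          rw [← hrat]
        rw [h1, ψ.commutes]
        rfl
      · -- sqrt case
        intro h
        set s : S := ⟨Real.sqrt c, h⟩ with hs
        have hcC' : c ∉ C' := Set.disjoint_left.mp hdisj hc
        have hsq : s ^ 2 = (⟨((⟨c, Or.inl hc⟩ : ι) : ℝ), hSmem ⟨c, Or.inl hc⟩⟩ : S) := by
          apply Subtype.ext
          have h2 : ((s ^ 2 : S) : ℝ) = ((s : ℝ)) ^ 2 := by push_cast; ring
          rw [h2]
          exact Real.sq_sqrt (hC hc)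
        have h2 : ψ s ^ 2 = Complex.ofReal c := by
          rw [← map_pow, hsq, hψt]
          have h3 : σ ⟨c, Or.inl hc⟩ = 1 := by simp [hσ, hcC']
          rw [h3]
          norm_num
        exact im_eq_zero_of_sq_eq_ofReal (hC hc) h2
      · intro h
        have h1 := hψt ⟨y, Or.inr hy⟩ h
        rw [h1]
        exact Complex.ofReal_im _
    | one =>
      intro h
      have h1 : (⟨(1:ℝ), h⟩ : S) = 1 := by
        apply Subtype.ext; push_cast; rfl
      rw [h1, map_one]; rfl
    | add y z hy hz ihy ihz =>
      intro h
      have h1 : (⟨y + z, h⟩ : S) = ⟨y, hKS hy⟩ + ⟨z, hKS hz⟩ := by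
        apply Subtype.ext; push_cast; rfl
      rw [h1, map_add, Complex.add_im, ihy, ihz, add_zero]
    | neg y hy ihy =>
      intro h
      have h1 : (⟨-y, h⟩ : S) = -(⟨y, hKS hy⟩ : S) := by
        apply Subtype.ext; push_cast; rfl
      rw [h1, map_neg, Complex.neg_im, ihy, neg_zero]
    | inv y hy ihy =>
      intro h
      have h1 : (⟨y⁻¹, h⟩ : S) = (⟨y, hKS hy⟩ : S)⁻¹ := by
        apply Subtype.ext
        exact (IntermediateField.coe_inv S (⟨y, hKS hy⟩ : S)).symm
      rw [h1, map_inv₀, Complex.inv_im, ihy]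
      simp
    | mul y z hy hz ihy ihz =>
      intro h
      have h1 : (⟨y * z, h⟩ : S) = (⟨y, hKS hy⟩ : S) * ⟨z, hKS hz⟩ := by
        apply Subtype.ext; push_cast; rfl
      rw [h1, map_mul, Complex.mul_im, ihy, ihz]
      ring
  -- the contradiction
  set bS : S := ⟨b, hKS hb⟩ with hbS
  have hbim : (ψ bS).im = 0 := him b hb (hKS hb)
  have hbsq : bS ^ 2 = (⟨((⟨c', Or.inr hc'⟩ : ι) : ℝ), hSmem ⟨c', Or.inr hc'⟩⟩ : S) := by
    apply Subtype.ext
    have h2 : ((bS ^ 2 : S) : ℝ) = ((bS : ℝ)) ^ 2 := by push_cast; ring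
    rw [h2]
    exact hb2
  have hψb : ψ bS ^ 2 = Complex.ofReal (-c') := by
    rw [← map_pow, hbsq, hψt]
    have h3 : σ ⟨c', Or.inr hc'⟩ = -1 := by simp [hσ, hc']
    rw [h3]
    norm_num
  have hre : (ψ bS).re ^ 2 = -c' := by
    have h4 := congrArg Complex.re hψb
    rw [sq, Complex.mul_re, hbim] at h4
    simpa [sq] using h4
  nlinarith [sq_nonneg (ψ bS).re]
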